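/- arXiv:2507.12447 — 2 statements merged into one kernel-verified Lean document; each statement's English description precedes it below -/
import Mathlib

section
/- The family of power classes does not cover the space of admissible losses: there exists a continuous function L : ℝ × ℝ → ℝ with L(θ,a) ≥ 0 for all θ, a, with L(θ,a) = 0 if and only if a = θ, such that L does not belong to 𝓛_p for any exponent p > 0. (For example, L(θ,a) = |θ − a| / (1 + |log |θ − a||) for a ≠ θ and L(θ,θ) = 0 is such a loss.) -/
open Filter Asymptotics

/-- The power class `𝓛_p`: the set of continuous nonnegative losses
`L : ℝ × ℝ → ℝ` admitting a constant `c > 0` such that, for every `θ`,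
`a ↦ L(θ,a) - c·|θ - a|^p` is `o(|θ - a|^p)` as `a → θ`. -/
def PowerClass (p : ℝ) : Set (ℝ × ℝ → ℝ) :=
  {L | Continuous L ∧ (∀ θ a : ℝ, 0 ≤ L (θ, a)) ∧
    ∃ c : ℝ, 0 < c ∧
      ∀ θ : ℝ,
        (fun a : ℝ => L (θ, a) - c * |θ - a| ^ p) =o[nhds θ] (fun a : ℝ => |θ - a| ^ p)}

/-- The glue function is `o(t^p)` at `0` for every `p > 0`. -/
lemma expNegInvGlue_abs_isLittleO (p : ℝ) (hp : 0 < p) :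
    (fun a : ℝ => expNegInvGlue |a|) =o[nhds 0] (fun a : ℝ => |a| ^ p) := by
  rw [isLittleO_iff]
  intro ε hε
  set n : ℕ := ⌈p⌉₊ + 1 with hn
  have hfac : (0 : ℝ) < ((Nat.factorial n) : ℝ) := by positivity
  have hev : ∀ᶠ a : ℝ in nhds 0, |a| < min 1 (ε / (Nat.factorial n)) := by
    have : Tendsto (fun a : ℝ => |a|) (nhds 0) (nhds 0) := by
      simpa using continuous_abs.tendsto (0 : ℝ)
    exact this.eventually_lt_const (by positivity)
  filter_upwards [hev] with a ha
  rcases eq_or_ne a 0 with rfl | ha0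
  · simp [expNegInvGlue.zero, Real.zero_rpow hp.ne']
  · set t : ℝ := |a| with ht
    have ht0 : 0 < t := abs_pos.mpr ha0
    have ht1 : t ≤ 1 := le_of_lt (lt_of_lt_of_le ha (min_le_left _ _))
    have htε : t ≤ ε / (Nat.factorial n) := le_of_lt (lt_of_lt_of_le ha (min_le_right _ _))
    have hglue : expNegInvGlue t = Real.exp (-t⁻¹) := by
      simp [expNegInvGlue, not_le.mpr ht0]
    have key : Real.exp (-t⁻¹) ≤ (Nat.factorial n) * t ^ n := by
      have h1 : (t⁻¹) ^ n / (Nat.factorial n) ≤ Real.exp t⁻¹ :=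
        Real.pow_div_factorial_le_exp _ (by positivity) n
      have h2 : Real.exp (-t⁻¹) = (Real.exp t⁻¹)⁻¹ := by
        rw [Real.exp_neg]
      rw [h2]
      rw [inv_le_comm₀ (Real.exp_pos _) (by positivity)]
      calc ((Nat.factorial n) * t ^ n)⁻¹ = (t⁻¹) ^ n / (Nat.factorial n) := by
            field_simp; rw [← mul_pow, mul_one_div_cancel ht0.ne', one_pow]
          _ ≤ Real.exp t⁻¹ := h1
    have hpow : t ^ n ≤ t ^ p * t := by
      have h1 : t ^ (n : ℝ) ≤ t ^ (p + 1) := by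
        apply Real.rpow_le_rpow_of_exponent_ge ht0 ht1
        have := Nat.le_ceil p
        push_cast [hn]
        linarith
      calc t ^ n = t ^ (n : ℝ) := by rw [Real.rpow_natCast]
        _ ≤ t ^ (p + 1) := h1
        _ = t ^ p * t := by rw [Real.rpow_add ht0, Real.rpow_one]
    have htp : (0 : ℝ) < t ^ p := Real.rpow_pos_of_pos ht0 p
    have : expNegInvGlue t ≤ ε * t ^ p := by
      calc expNegInvGlue t = Real.exp (-t⁻¹) := hglue
        _ ≤ (Nat.factorial n) * t ^ n := key
        _ ≤ (Nat.factorial n) * (t ^ p * t) := by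
            exact mul_le_mul_of_nonneg_left hpow hfac.le
        _ ≤ (Nat.factorial n) * (t ^ p * (ε / (Nat.factorial n))) := by
            apply mul_le_mul_of_nonneg_left _ hfac.le
            exact mul_le_mul_of_nonneg_left htε htp.le
        _ = ε * t ^ p := by field_simp
    have hnn : 0 ≤ expNegInvGlue t := expNegInvGlue.nonneg t
    rw [Real.norm_eq_abs, Real.norm_eq_abs, abs_of_nonneg hnn, abs_of_nonneg htp.le]
    exact this

/-- The power classes do not cover the space of admissible losses: there is a
continuous, nonnegative loss vanishing exactly on the diagonal that belongs to
no power class `𝓛_p` with `p > 0`. -/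
theorem exists_loss_not_in_any_powerClass :
    ∃ L : ℝ × ℝ → ℝ, Continuous L ∧ (∀ θ a : ℝ, 0 ≤ L (θ, a)) ∧
      (∀ θ a : ℝ, L (θ, a) = 0 ↔ a = θ) ∧
      ∀ p : ℝ, 0 < p → L ∉ PowerClass p := by
  refine ⟨fun x => expNegInvGlue |x.1 - x.2|, ?_, ?_, ?_, ?_⟩
  · exact (expNegInvGlue.contDiff (n := 1)).continuous.comp (continuous_fst.sub continuous_snd).abs
  · intro θ a; exact expNegInvGlue.nonneg _
  · intro θ a
    rw [expNegInvGlue.zero_iff_nonpos]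
    constructor
    · intro h
      have : |θ - a| = 0 := le_antisymm h (abs_nonneg _)
      have : θ - a = 0 := abs_eq_zero.mp this
      linarith
    · rintro rfl; simp
  · rintro p hp ⟨-, -, c, hc, hθ⟩
    have h0 := hθ 0
    simp only [zero_sub, abs_neg] at h0
    have hB := expNegInvGlue_abs_isLittleO p hp
    have hC : (fun a : ℝ => c * |a| ^ p) =o[nhds 0] (fun a : ℝ => |a| ^ p) := by
      have := hB.sub h0
      simpa using this
    rw [isLittleO_iff] at hC
    have hhalf : (0 : ℝ) < c / 2 := by linarith
    have hev := hC hhalf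
    have hev' : ∀ᶠ a : ℝ in nhdsWithin 0 {0}ᶜ,
        ‖c * |a| ^ p‖ ≤ c / 2 * ‖|a| ^ p‖ := nhdsWithin_le_nhds hev
    obtain ⟨a, ha, ha0⟩ := (hev'.and self_mem_nhdsWithin).exists
    have ha0' : a ≠ 0 := ha0
    have htp : (0 : ℝ) < |a| ^ p := Real.rpow_pos_of_pos (abs_pos.mpr ha0') p
    rw [Real.norm_eq_abs, Real.norm_eq_abs, abs_of_nonneg htp.le,
      abs_of_pos (mul_pos hc htp)] at ha
    nlinarith
end

section
/- Differentiability of the power risk under the Gaussian measure: let γ be the standard Gaussian probability measure on ℝ (mean 0, variance 1) and let q > 1. Define f(α) := ∫ |z − α|^q dγ(z). Then for every α ∈ ℝ, f is differentiable at α with derivative f′(α) = −q · ∫ sign(z − α) · |z − α|^{q−1} dγ(z), where sign denotes the real sign function. -/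
open MeasureTheory ProbabilityTheory Real

lemma gauss_integrable_exp_mul_abs (c : ℝ) :
    Integrable (fun z : ℝ => Real.exp (c * |z|)) (gaussianReal 0 1) := by
  rw [gaussianReal_of_var_ne_zero 0 one_ne_zero,
    integrable_withDensity_iff (measurable_gaussianPDF 0 1)
      (ae_of_all _ fun x => ENNReal.ofReal_lt_top)]
  have hpdf : ∀ z : ℝ, ((gaussianPDF 0 1 z).toReal) = gaussianPDFReal 0 1 z := fun z =>
    ENNReal.toReal_ofReal (gaussianPDFReal_nonneg 0 1 z)
  apply Integrable.mono' (g := fun z : ℝ => (Real.sqrt (2 * π))⁻¹ * Real.exp (c ^ 2) *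
      Real.exp (-(1/4) * z ^ 2))
  · exact ((integrable_exp_neg_mul_sq (by norm_num : (0:ℝ) < 1/4)).const_mul _)
  · apply Measurable.aestronglyMeasurable
    exact (measurable_exp.comp (measurable_abs.const_mul c)).mul
      ((measurable_gaussianPDF 0 1).ennreal_toReal)
  · refine ae_of_all _ fun z => ?_
    rw [Real.norm_eq_abs, abs_of_nonneg (by positivity), hpdf]
    unfold gaussianPDFReal
    push_cast
    rw [sub_zero]
    norm_num only [mul_one]
    have hk : (0:ℝ) ≤ (Real.sqrt (2 * π))⁻¹ := by positivity
    calc Real.exp (c * |z|) * ((Real.sqrt (2 * π))⁻¹ * Real.exp (-z ^ 2 / 2))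
        = (Real.sqrt (2 * π))⁻¹ * (Real.exp (c * |z|) * Real.exp (-z ^ 2 / 2)) := by ring
      _ ≤ (Real.sqrt (2 * π))⁻¹ * (Real.exp (c ^ 2) * Real.exp (-(1/4) * z ^ 2)) := by
          rw [← Real.exp_add, ← Real.exp_add]
          apply mul_le_mul_of_nonneg_left _ hk
          exact Real.exp_le_exp.2 (by nlinarith [sq_nonneg (2 * c - |z|), sq_abs z])
      _ = (Real.sqrt (2 * π))⁻¹ * Real.exp (c ^ 2) * Real.exp (-(1/4) * z ^ 2) := by ring

lemma gauss_rpow_le_exp_mul {x p : ℝ} (hx : 0 ≤ x) (hp : 0 ≤ p) :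
    x ^ p ≤ Real.exp (p * x) := by
  calc x ^ p ≤ (Real.exp x) ^ p :=
        Real.rpow_le_rpow hx (by linarith [Real.add_one_le_exp x]) hp
    _ = Real.exp (p * x) := by rw [← Real.exp_mul, mul_comm]

lemma gauss_abs_sign_le_one (x : ℝ) : |Real.sign x| ≤ 1 := by
  rcases lt_trichotomy x 0 with h | h | h
  · simp [Real.sign_of_neg h]
  · simp [h]
  · simp [Real.sign_of_pos h]

lemma gauss_hasDerivAt_abs_rpow_sign {q : ℝ} (hq : 1 < q) (x : ℝ) :
    HasDerivAt (fun y : ℝ => |y| ^ q) (q * (Real.sign x * |x| ^ (q - 1))) x := by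
  have h := hasDerivAt_abs_rpow x hq
  convert h using 1
  rcases eq_or_ne x 0 with rfl | hx
  · simp [Real.sign_zero, Real.zero_rpow (show q - 1 ≠ 0 by linarith)]
  · have habs : (0:ℝ) < |x| := abs_pos.2 hx
    have h1 : |x| ^ (q - 1) = |x| ^ (q - 2) * |x| := by
      rw [← Real.rpow_add_one (abs_ne_zero.2 hx)]
      ring_nf
    rw [h1]
    have h2 : Real.sign x * |x| = x := by
      rcases lt_trichotomy x 0 with h | h | h
      · rw [Real.sign_of_neg h, abs_of_neg h]; ring
      · simp [h]
      · rw [Real.sign_of_pos h, abs_of_pos h]; ring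
    calc q * (Real.sign x * (|x| ^ (q - 2) * |x|))
        = q * |x| ^ (q - 2) * (Real.sign x * |x|) := by ring
      _ = q * |x| ^ (q - 2) * x := by rw [h2]

/-- Differentiability of the power risk under the standard Gaussian measure:
for `q > 1`, the function `f(α) = ∫ |z - α|^q dγ(z)` (with `γ` the standard
Gaussian) is differentiable at every `α`, with derivative
`f'(α) = -q · ∫ sign(z - α) · |z - α|^(q-1) dγ(z)`. -/
theorem hasDerivAt_gaussian_power_risk (q : ℝ) (hq : 1 < q) (α : ℝ) :
    HasDerivAt (fun a : ℝ => ∫ z, |z - a| ^ q ∂(gaussianReal 0 1))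
      (-q * ∫ z, Real.sign (z - α) * |z - α| ^ (q - 1) ∂(gaussianReal 0 1)) α := by
  set γ := gaussianReal 0 1
  have hq0 : (0:ℝ) ≤ q := by linarith
  have hq1 : (0:ℝ) ≤ q - 1 := by linarith
  set F : ℝ → ℝ → ℝ := fun a z => |z - a| ^ q with hF
  set F' : ℝ → ℝ → ℝ := fun a z => -q * (Real.sign (z - a) * |z - a| ^ (q - 1)) with hF'
  set bound : ℝ → ℝ := fun z => q * Real.exp ((q - 1) * (|α| + 1)) *
    Real.exp ((q - 1) * |z|) with hbound
  have hsign : Measurable Real.sign := by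
    have h : Real.sign = fun r : ℝ => if r < 0 then (-1:ℝ) else if 0 < r then 1 else 0 :=
      funext fun r => rfl
    rw [h]
    exact Measurable.ite (measurableSet_lt measurable_id measurable_const) measurable_const
      (Measurable.ite (measurableSet_lt measurable_const measurable_id) measurable_const
        measurable_const)
  have hmeas : ∀ a : ℝ, AEStronglyMeasurable (F a) γ := fun a =>
    (((continuous_id.sub continuous_const).abs.rpow_const
      (fun x => Or.inr hq0)).aestronglyMeasurable)
  have hF'meas : AEStronglyMeasurable (F' α) γ := by
    apply Measurable.aestronglyMeasurable
    apply Measurable.const_mul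
    exact ((hsign.comp (measurable_id.sub_const α)).mul
      (((measurable_id.sub_const α).abs).pow_const _))
  have hFint : Integrable (F α) γ := by
    apply ((gauss_integrable_exp_mul_abs q).const_mul (Real.exp (q * |α|))).mono' (hmeas α)
    refine ae_of_all _ fun z => ?_
    rw [Real.norm_eq_abs, hF]
    simp only
    rw [abs_of_nonneg (Real.rpow_nonneg (abs_nonneg _) q)]
    calc |z - α| ^ q ≤ Real.exp (q * |z - α|) := gauss_rpow_le_exp_mul (abs_nonneg _) hq0
      _ ≤ Real.exp (q * (|α| + |z|)) := by
          apply Real.exp_le_exp.2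
          have : |z - α| ≤ |z| + |α| := abs_sub (z) (α)
          nlinarith
      _ = Real.exp (q * |α|) * Real.exp (q * |z|) := by rw [← Real.exp_add]; ring_nf
  have hboundint : Integrable bound γ := by
    simpa [hbound, mul_assoc] using
      ((gauss_integrable_exp_mul_abs (q - 1)).const_mul (q * Real.exp ((q - 1) * (|α| + 1))))
  have h_bound : ∀ᵐ z ∂γ, ∀ a ∈ Metric.ball α 1, ‖F' a z‖ ≤ bound z := by
    refine ae_of_all _ fun z a ha => ?_
    have haα : |a| < |α| + 1 := by
      have := mem_ball_iff_norm.1 ha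
      calc |a| = |α + (a - α)| := by ring_nf
        _ ≤ |α| + |a - α| := abs_add_le _ _
        _ < |α| + 1 := by
            have : |a - α| < 1 := by rwa [Real.norm_eq_abs] at this
            linarith
    have h1 : ‖F' a z‖ ≤ q * |z - a| ^ (q - 1) := by
      rw [hF']
      simp only [Real.norm_eq_abs]
      rw [abs_mul, abs_mul, abs_neg, abs_of_nonneg hq0,
        abs_of_nonneg (Real.rpow_nonneg (abs_nonneg _) _)]
      have hr : (0:ℝ) ≤ |z - a| ^ (q - 1) := Real.rpow_nonneg (abs_nonneg _) _
      exact mul_le_mul_of_nonneg_left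
        (mul_le_of_le_one_left hr (gauss_abs_sign_le_one (z - a))) hq0
    refine h1.trans ?_
    rw [hbound]
    have h2 : |z - a| ^ (q - 1) ≤ Real.exp ((q - 1) * (|α| + 1)) * Real.exp ((q - 1) * |z|) := by
      calc |z - a| ^ (q - 1) ≤ Real.exp ((q - 1) * |z - a|) :=
            gauss_rpow_le_exp_mul (abs_nonneg _) hq1
        _ ≤ Real.exp ((q - 1) * ((|α| + 1) + |z|)) := by
            apply Real.exp_le_exp.2
            have h3 : |z - a| ≤ |z| + |a| := abs_sub z a
            nlinarith
        _ = Real.exp ((q - 1) * (|α| + 1)) * Real.exp ((q - 1) * |z|) := by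
            rw [← Real.exp_add]; ring_nf
    calc q * |z - a| ^ (q - 1)
        ≤ q * (Real.exp ((q - 1) * (|α| + 1)) * Real.exp ((q - 1) * |z|)) := by
          exact mul_le_mul_of_nonneg_left h2 hq0
      _ = q * Real.exp ((q - 1) * (|α| + 1)) * Real.exp ((q - 1) * |z|) := by ring
  have h_diff : ∀ᵐ z ∂γ, ∀ a ∈ Metric.ball α 1, HasDerivAt (fun a => F a z) (F' a z) a := by
    refine ae_of_all _ fun z a _ => ?_
    have hinner : HasDerivAt (fun a : ℝ => z - a) (-1) a := by
      simpa using (hasDerivAt_id a).const_sub z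
    have houter := gauss_hasDerivAt_abs_rpow_sign hq (z - a)
    have := houter.comp a hinner
    refine this.congr_deriv ?_
    rw [hF']
    ring
  have key := hasDerivAt_integral_of_dominated_loc_of_deriv_le (Metric.ball_mem_nhds α one_pos)
    (Filter.Eventually.of_forall fun a => hmeas a) hFint hF'meas h_bound hboundint h_diff
  have h2 := key.2
  have heq : ∫ z, F' α z ∂γ =
      -q * ∫ z, Real.sign (z - α) * |z - α| ^ (q - 1) ∂γ := by
    rw [hF']
    simp only
    rw [MeasureTheory.integral_const_mul]
  rwa [heq] at h2
end
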